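/- Let γ : [0,∞) → [0,∞) be continuous and nondecreasing with γ(0) = 0, γ(s) > 0 for every s > 0, and ∫₀^ε ds/γ(s) = +∞ for every ε > 0. Let T > 0, C > 0, B ≥ 0, and let (u_{p,q}) for integers p ≥ q ≥ 0 be measurable functions from [0,T] to [0,B] satisfying u_{p+1,q+1}(t) ≤ C ∫₀ᵗ γ( u_{p,q}(s) ) ds for all p ≥ q ≥ 0 and t ∈ [0,T]. Then for every t ∈ [0,T], sup_{p ≥ q ≥ N} u_{p,q}(t) → 0 as N → ∞ (equivalently, inf_{N≥0} sup_{p≥q≥N} u_{p,q}(t) = 0). -/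

import Mathlib

open MeasureTheory Set Filter

/-- The deterministic majorant sequence: `bihariW γ C B 0 = B` and
`bihariW γ C B (n+1) t = min B (max 0 (C ∫₀ᵗ γ(max (w n s) 0) ds))`. -/
noncomputable def bihariW (γ : ℝ → ℝ) (C B : ℝ) : ℕ → ℝ → ℝ
  | 0 => fun _ => B
  | (n + 1) => fun t =>
      min B (max 0 (C * ∫ s in (0:ℝ)..t, γ (max (bihariW γ C B n s) 0)))

lemma osgood_aux
    (γ : ℝ → ℝ)
    (hγ_mono : MonotoneOn γ (Ici (0 : ℝ)))
    (hγ_pos : ∀ s : ℝ, 0 < s → 0 < γ s)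
    (h_osgood : ∀ ε : ℝ, 0 < ε →
      ∫⁻ s in Ioc (0 : ℝ) ε, ENNReal.ofReal (1 / γ s) = ⊤)
    (C T : ℝ) (hC : 0 < C) (hT : 0 < T)
    (Ψ : ℝ → ℝ) (hΨc : ContinuousOn Ψ (Icc 0 T)) (hΨ0 : Ψ 0 = 0)
    (hinc : ∀ a b : ℝ, 0 ≤ a → a ≤ b → b ≤ T → Ψ b - Ψ a ≤ C * (b - a) * γ (Ψ b)) :
    ∀ t ∈ Icc (0 : ℝ) T, Ψ t ≤ 0 := by
  by_contra h
  push_neg at h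
  obtain ⟨t1, ht1T, ht1⟩ := h
  set ε := Ψ t1 with hε
  have hεpos : 0 < ε := ht1
  -- step: from a point with value ε/2^k, find a lower point with value ε/2^(k+1)
  have key : ∀ (k : ℕ) (b : ℝ), b ∈ Icc (0:ℝ) T → Ψ b = ε / 2 ^ k →
      ∃ a, a ∈ Icc (0:ℝ) b ∧ Ψ a = ε / 2 ^ (k + 1) := by
    intro k b hb hΨb
    have h0b : (0:ℝ) ≤ b := hb.1
    have hsub : Icc (0:ℝ) b ⊆ Icc 0 T := Icc_subset_Icc le_rfl hb.2
    have hiv := intermediate_value_Icc h0b (hΨc.mono hsub)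
    have hmem : ε / 2 ^ (k + 1) ∈ Icc (Ψ 0) (Ψ b) := by
      rw [hΨ0, hΨb]
      constructor
      · positivity
      · rw [pow_succ]
        rw [div_le_div_iff₀ (by positivity) (by positivity)]
        nlinarith [pow_pos (show (0:ℝ) < 2 by norm_num) k, hεpos]
    obtain ⟨a, ha, hΨa⟩ := hiv hmem
    exact ⟨a, ha, hΨa⟩
  choose! next hnext1 hnext2 using key
  -- the sequence t' k with Ψ (t' k) = ε/2^k
  set t' : ℕ → ℝ := fun k => Nat.rec t1 (fun k x => next k x) k with ht'
  have ht'0 : t' 0 = t1 := rfl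
  have ht'succ : ∀ k, t' (k + 1) = next k (t' k) := fun k => rfl
  have inv : ∀ k, t' k ∈ Icc (0:ℝ) T ∧ Ψ (t' k) = ε / 2 ^ k := by
    intro k
    induction k with
    | zero => exact ⟨ht1T, by simp [ht'0, hε]⟩
    | succ k ih =>
      have h1 := hnext1 k (t' k) ih.1 ih.2
      have h2 := hnext2 k (t' k) ih.1 ih.2
      rw [ht'succ]
      exact ⟨⟨h1.1, h1.2.trans ih.1.2⟩, h2⟩
  have hanti : ∀ k, t' (k + 1) ≤ t' k := by
    intro k
    have := hnext1 k (t' k) (inv k).1 (inv k).2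
    rw [ht'succ]; exact this.2
  -- gap bound
  have gap : ∀ k, ε / 2 ^ (k + 1) ≤ C * (t' k - t' (k + 1)) * γ (ε / 2 ^ k) := by
    intro k
    have h1 := hinc (t' (k + 1)) (t' k) (inv (k + 1)).1.1 (hanti k) (inv k).1.2
    rw [(inv k).2, (inv (k + 1)).2] at h1
    have : ε / 2 ^ k - ε / 2 ^ (k + 1) = ε / 2 ^ (k + 1) := by
      rw [pow_succ]; ring
    linarith [this ▸ h1]
  have hγk : ∀ k : ℕ, 0 < γ (ε / 2 ^ k) := fun k => hγ_pos _ (by positivity)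
  -- piece bound
  have piece : ∀ k : ℕ,
      (∫⁻ s in Ioc (ε / 2 ^ (k + 1)) (ε / 2 ^ k), ENNReal.ofReal (1 / γ s))
        ≤ ENNReal.ofReal (2 * C * (t' (k + 1) - t' (k + 2))) := by
    intro k
    have hlo : (0:ℝ) < ε / 2 ^ (k + 1) := by positivity
    have hbound : ∀ s ∈ Ioc (ε / 2 ^ (k + 1)) (ε / 2 ^ k),
        (1 : ℝ) / γ s ≤ 1 / γ (ε / 2 ^ (k + 1)) := by
      intro s hs
      have hsp : 0 < s := hlo.trans hs.1
      have hmono := hγ_mono (le_of_lt hlo) (le_of_lt hsp) hs.1.le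
      exact one_div_le_one_div_of_le (hγ_pos _ hlo) hmono
    calc (∫⁻ s in Ioc (ε / 2 ^ (k + 1)) (ε / 2 ^ k), ENNReal.ofReal (1 / γ s))
        ≤ ∫⁻ _ in Ioc (ε / 2 ^ (k + 1)) (ε / 2 ^ k),
            ENNReal.ofReal (1 / γ (ε / 2 ^ (k + 1))) := by
          refine lintegral_mono_ae ?_
          filter_upwards [ae_restrict_mem measurableSet_Ioc] with s hs
          exact ENNReal.ofReal_le_ofReal (hbound s hs)
      _ = ENNReal.ofReal (1 / γ (ε / 2 ^ (k + 1))) *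
            volume (Ioc (ε / 2 ^ (k + 1)) (ε / 2 ^ k)) := setLIntegral_const _ _
      _ ≤ ENNReal.ofReal (2 * C * (t' (k + 1) - t' (k + 2))) := by
          have hγp := hγk (k + 1)
          have hεk : ε / 2 ^ k - ε / 2 ^ (k + 1) = ε / 2 ^ (k + 1) := by
            rw [pow_succ]; ring
          rw [Real.volume_Ioc, hεk,
            ← ENNReal.ofReal_mul (le_of_lt (one_div_pos.2 hγp))]
          refine ENNReal.ofReal_le_ofReal ?_
          have h2 : ε / 2 ^ (k + 2) ≤ C * (t' (k + 1) - t' (k + 2)) * γ (ε / 2 ^ (k + 1)) :=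
            gap (k + 1)
          have hhalf : ε / 2 ^ (k + 1) = 2 * (ε / 2 ^ (k + 2)) := by
            rw [pow_succ]; ring
          have hle2 : ε / 2 ^ (k + 1)
              ≤ 2 * C * (t' (k + 1) - t' (k + 2)) * γ (ε / 2 ^ (k + 1)) := by
            nlinarith [h2, hhalf]
          calc 1 / γ (ε / 2 ^ (k + 1)) * (ε / 2 ^ (k + 1))
              ≤ 1 / γ (ε / 2 ^ (k + 1)) *
                  (2 * C * (t' (k + 1) - t' (k + 2)) * γ (ε / 2 ^ (k + 1))) :=
                mul_le_mul_of_nonneg_left hle2 (le_of_lt (one_div_pos.2 hγp))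
            _ = 2 * C * (t' (k + 1) - t' (k + 2)) := by field_simp
  -- decomposition of Ioc 0 ε
  have hdecomp : Ioc (0:ℝ) ε = ⋃ k : ℕ, Ioc (ε / 2 ^ (k + 1)) (ε / 2 ^ k) := by
    ext s
    simp only [mem_Ioc, mem_iUnion]
    constructor
    · rintro ⟨hs0, hsε⟩
      have hex : ∃ k : ℕ, ε / 2 ^ (k + 1) < s := by
        obtain ⟨n, hn⟩ := exists_pow_lt_of_lt_one (show (0:ℝ) < s / ε by positivity)
          (show (1:ℝ)/2 < 1 by norm_num)
        refine ⟨n, ?_⟩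
        have : ε * (1/2) ^ (n+1) < ε * (s / ε) := by
          refine mul_lt_mul_of_pos_left ?_ hεpos
          calc (1/2:ℝ) ^ (n+1) ≤ (1/2)^n := by
                exact pow_le_pow_of_le_one (by norm_num) (by norm_num) (by omega)
            _ < s / ε := hn
        have h2 : ε * (s / ε) = s := by field_simp
        have h3 : ε * (1/2:ℝ) ^ (n+1) = ε / 2 ^ (n+1) := by
          rw [div_pow]; ring
        linarith [h3 ▸ (h2 ▸ this)]
      classical
      have hk := Nat.find_spec hex
      set k := Nat.find hex
      refine ⟨k, hk, ?_⟩
      match hkk : k with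
      | 0 => simpa using hsε
      | (j + 1) =>
        have := Nat.find_min hex (by omega : j < k)
        push_neg at this
        simpa using this
    · rintro ⟨k, hk1, hk2⟩
      constructor
      · exact lt_trans (by positivity) hk1
      · calc s ≤ ε / 2 ^ k := hk2
          _ ≤ ε := div_le_self hεpos.le (one_le_pow₀ (by norm_num))
  -- disjointness
  have hdisj : Pairwise (Function.onFun Disjoint fun k : ℕ => Ioc (ε / 2 ^ (k + 1)) (ε / 2 ^ k)) := by
    have hmono2 : ∀ i j : ℕ, i ≤ j → ε / 2 ^ j ≤ ε / 2 ^ i := by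
      intro i j hij
      apply div_le_div_of_nonneg_left hεpos.le (by positivity)
      exact pow_le_pow_right₀ (by norm_num) hij
    refine (pairwise_disjoint_on _).2 ?_
    intro i j hij
    rw [Set.Ioc_disjoint_Ioc]
    calc min (ε / 2 ^ i) (ε / 2 ^ j) ≤ ε / 2 ^ j := min_le_right _ _
      _ ≤ ε / 2 ^ (i + 1) := hmono2 _ _ (by omega)
      _ ≤ max (ε / 2 ^ (i + 1)) (ε / 2 ^ (j + 1)) := le_max_left _ _
  -- final contradiction
  have htop := h_osgood ε hεpos
  rw [hdecomp] at htop
  rw [Measure.restrict_iUnion hdisj (fun k => measurableSet_Ioc), lintegral_sum_measure] at htop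
  have hle : (∑' k : ℕ, ∫⁻ s in Ioc (ε / 2 ^ (k + 1)) (ε / 2 ^ k), ENNReal.ofReal (1 / γ s))
      ≤ ENNReal.ofReal (2 * C * T) := by
    calc (∑' k : ℕ, ∫⁻ s in Ioc (ε / 2 ^ (k + 1)) (ε / 2 ^ k), ENNReal.ofReal (1 / γ s))
        ≤ ∑' k : ℕ, ENNReal.ofReal (2 * C * (t' (k + 1) - t' (k + 2))) :=
          ENNReal.tsum_le_tsum piece
      _ ≤ ENNReal.ofReal (2 * C * T) := by
          rw [ENNReal.tsum_eq_iSup_sum]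
          refine iSup_le fun F => ?_
          obtain ⟨K, hK⟩ := F.exists_nat_subset_range
          calc (∑ k ∈ F, ENNReal.ofReal (2 * C * (t' (k + 1) - t' (k + 2))))
              ≤ ∑ k ∈ Finset.range K, ENNReal.ofReal (2 * C * (t' (k + 1) - t' (k + 2))) :=
                Finset.sum_le_sum_of_subset hK
            _ = ENNReal.ofReal (∑ k ∈ Finset.range K, 2 * C * (t' (k + 1) - t' (k + 2))) := by
                rw [ENNReal.ofReal_sum_of_nonneg]
                intro k _
                have := hanti (k + 1)
                nlinarith
            _ ≤ ENNReal.ofReal (2 * C * T) := by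
                refine ENNReal.ofReal_le_ofReal ?_
                have htel : ∑ k ∈ Finset.range K, 2 * C * (t' (k + 1) - t' (k + 2))
                    = 2 * C * (t' 1 - t' (K + 1)) := by
                  rw [← Finset.mul_sum]
                  congr 1
                  exact Finset.sum_range_sub' (fun k => t' (k + 1)) K
                rw [htel]
                have h1 : t' 1 ≤ T := (inv 1).1.2
                have h2 : 0 ≤ t' (K + 1) := (inv (K + 1)).1.1
                nlinarith
  rw [htop] at hle
  exact absurd hle (by simp)

/-- **Double-index Bihari-type lemma.**
Let `γ` satisfy the Osgood condition and let bounded measurable functions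
`u_{p,q} : [0,T] → [0,B]` (for `p ≥ q`) satisfy
`u_{p+1,q+1}(t) ≤ C ∫₀ᵗ γ(u_{p,q}(s)) ds`. Then for each `t ∈ [0,T]`,
`inf_N sup_{p ≥ q ≥ N} u_{p,q}(t) = 0`, i.e. `limsup_{p,q→∞} u_{p,q}(t) = 0`. -/
theorem double_index_bihari
    (γ : ℝ → ℝ) (T C B : ℝ)
    (hT : 0 < T) (hC : 0 < C) (hB : 0 ≤ B)
    (hγ_cont : ContinuousOn γ (Ici (0 : ℝ)))
    (hγ_mono : MonotoneOn γ (Ici (0 : ℝ)))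
    (hγ_nonneg : ∀ s : ℝ, 0 ≤ s → 0 ≤ γ s)
    (hγ_zero : γ 0 = 0)
    (hγ_pos : ∀ s : ℝ, 0 < s → 0 < γ s)
    (h_osgood : ∀ ε : ℝ, 0 < ε →
      ∫⁻ s in Ioc (0 : ℝ) ε, ENNReal.ofReal (1 / γ s) = ⊤)
    (u : ℕ → ℕ → ℝ → ℝ)
    (hu_meas : ∀ p q : ℕ, q ≤ p → Measurable (u p q))
    (hu_mem : ∀ p q : ℕ, q ≤ p → ∀ t ∈ Icc (0 : ℝ) T, u p q t ∈ Icc (0 : ℝ) B)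
    (h_rec : ∀ p q : ℕ, q ≤ p → ∀ t ∈ Icc (0 : ℝ) T,
      u (p + 1) (q + 1) t ≤ C * ∫ s in (0 : ℝ)..t, γ (u p q s)) :
    ∀ t ∈ Icc (0 : ℝ) T,
      (⨅ N : ℕ, ⨆ p : ℕ, ⨆ q : ℕ, ⨆ (_ : N ≤ q), ⨆ (_ : q ≤ p), u p q t) = 0 := by
  -- the truncated monotone version `γ'` of `γ`
  set γ' : ℝ → ℝ := fun s => γ (max s 0) with hγ'
  have hγ'c : Continuous γ' :=
    hγ_cont.comp_continuous (continuous_id.max continuous_const)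
      (fun x => mem_Ici.2 (le_max_right _ _))
  have hγ'mono : Monotone γ' := fun a b hab =>
    hγ_mono (mem_Ici.2 (le_max_right _ _)) (mem_Ici.2 (le_max_right _ _)) (max_le_max hab le_rfl)
  have hγ'nn : ∀ s, 0 ≤ γ' s := fun s => hγ_nonneg _ (le_max_right _ _)
  have hγ'eq : ∀ s, 0 ≤ s → γ' s = γ s := fun s hs => by
    simp only [hγ', max_eq_left hs]
  have hγ'B : ∀ s, s ≤ B → γ' s ≤ γ B := fun s hs => by
    rw [← hγ'eq B hB]; exact hγ'mono hs
  -- the majorant sequence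
  set w : ℕ → ℝ → ℝ := bihariW γ C B with hw
  have hwsucc : ∀ n t, w (n + 1) t
      = min B (max 0 (C * ∫ s in (0:ℝ)..t, γ' (w n s))) := by
    intro n t
    simp only [hw, bihariW, hγ']
  have hw0 : ∀ t, w 0 t = B := fun t => rfl
  have hw_mem : ∀ n t, w n t ∈ Icc (0:ℝ) B := by
    intro n t
    cases n with
    | zero => exact ⟨hB, le_rfl⟩
    | succ n =>
      rw [hwsucc]
      exact ⟨le_min hB (le_max_left _ _), min_le_left _ _⟩
  have hw_cont : ∀ n, Continuous (w n) := by
    intro n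
    induction n with
    | zero => exact continuous_const
    | succ n ih =>
      have hint : Continuous fun s => γ' (w n s) := hγ'c.comp ih
      have hcm : Continuous fun t => C * ∫ s in (0:ℝ)..t, γ' (w n s) :=
        continuous_const.mul
          (intervalIntegral.continuous_primitive
            (fun a b => hint.intervalIntegrable a b) 0)
      have heqw : w (n + 1) = fun t =>
          min B (max 0 (C * ∫ s in (0:ℝ)..t, γ' (w n s))) := funext (hwsucc n)
      rw [heqw]
      exact continuous_const.min (continuous_const.max hcm)
  have hwint : ∀ n a b, IntervalIntegrable (fun s => γ' (w n s)) volume a b :=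
    fun n a b => ((hγ'c.comp (hw_cont n)).intervalIntegrable a b)
  have hw_anti : ∀ n t, 0 ≤ t → w (n + 1) t ≤ w n t := by
    intro n
    induction n with
    | zero => intro t ht; rw [hwsucc, hw0]; exact min_le_left _ _
    | succ n ih =>
      intro t ht
      rw [hwsucc, hwsucc]
      refine min_le_min le_rfl (max_le_max le_rfl ?_)
      refine mul_le_mul_of_nonneg_left ?_ hC.le
      refine intervalIntegral.integral_mono_on ht (hwint _ _ _) (hwint _ _ _) ?_
      intro s hs
      exact hγ'mono (ih s hs.1)
  have hw_anti' : ∀ t, 0 ≤ t → ∀ m n : ℕ, m ≤ n → w n t ≤ w m t := by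
    intro t ht
    have h := antitone_nat_of_succ_le (f := fun n => w n t) (fun k => hw_anti k t ht)
    exact fun m n hmn => h hmn
  -- the limit function W
  set W : ℝ → ℝ := fun t => ⨅ n, w n t with hWdef
  have hWbdd : ∀ t, BddBelow (range fun n => w n t) := by
    intro t
    exact ⟨0, by rintro x ⟨n, rfl⟩; exact (hw_mem n t).1⟩
  have hW_mem : ∀ t, W t ∈ Icc (0:ℝ) B := by
    intro t
    constructor
    · exact le_ciInf fun n => (hw_mem n t).1
    · exact (ciInf_le (hWbdd t) 0).trans (hw_mem 0 t).2
  have hW_tendsto : ∀ t, 0 ≤ t → Tendsto (fun n => w n t) atTop (nhds (W t)) := by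
    intro t ht
    exact tendsto_atTop_ciInf
      (antitone_nat_of_succ_le fun n => hw_anti n t ht) (hWbdd t)
  have hW_meas : Measurable W := Measurable.iInf fun n => (hw_cont n).measurable
  have hg_meas : Measurable fun s => γ' (W s) := hγ'c.measurable.comp hW_meas
  have hg_bound : ∀ s, γ' (W s) ≤ γ B := fun s => hγ'B _ (hW_mem s).2
  have hgint : ∀ a b, IntervalIntegrable (fun s => γ' (W s)) volume a b := by
    intro a b
    refine IntervalIntegrable.mono_fun' (g := fun _ => γ B) intervalIntegrable_const
      hg_meas.aestronglyMeasurable.restrict ?_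
    filter_upwards with s
    rw [Real.norm_eq_abs, abs_of_nonneg (hγ'nn _)]
    exact hg_bound s
  -- the function Ψ
  set Ψ : ℝ → ℝ := fun t => C * ∫ s in (0:ℝ)..t, γ' (W s) with hΨdef
  have hΨc : Continuous Ψ :=
    continuous_const.mul (intervalIntegral.continuous_primitive hgint 0)
  have hΨ0 : Ψ 0 = 0 := by simp [hΨdef]
  have hΨmono : ∀ a b : ℝ, a ≤ b → Ψ a ≤ Ψ b := by
    intro a b hab
    have hsplit : (∫ s in (0:ℝ)..a, γ' (W s)) + ∫ s in a..b, γ' (W s)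
        = ∫ s in (0:ℝ)..b, γ' (W s) :=
      intervalIntegral.integral_add_adjacent_intervals (hgint 0 a) (hgint a b)
    have hnn : 0 ≤ ∫ s in a..b, γ' (W s) :=
      intervalIntegral.integral_nonneg hab (fun s _ => hγ'nn _)
    simp only [hΨdef]
    nlinarith
  have hΨnn : ∀ t, 0 ≤ t → 0 ≤ Ψ t := fun t ht => hΨ0 ▸ hΨmono 0 t ht
  -- W ≤ Ψ on [0, T] (by dominated convergence)
  have hWΨ : ∀ t ∈ Icc (0:ℝ) T, W t ≤ Ψ t := by
    intro t ht
    have hDCT : Tendsto (fun n => ∫ s in (0:ℝ)..t, γ' (w n s)) atTop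
        (nhds (∫ s in (0:ℝ)..t, γ' (W s))) := by
      refine intervalIntegral.tendsto_integral_filter_of_dominated_convergence
        (fun _ => γ B)
        (Eventually.of_forall fun n =>
          (hγ'c.comp (hw_cont n)).aestronglyMeasurable.restrict)
        (Eventually.of_forall fun n => ?_)
        (intervalIntegrable_const)
        ?_
      · filter_upwards with x hx
        rw [Real.norm_eq_abs, abs_of_nonneg (hγ'nn _)]
        exact hγ'B _ (hw_mem n x).2
      · filter_upwards with x hx
        have hx0 : 0 ≤ x := by
          rw [uIoc_of_le ht.1] at hx
          exact hx.1.le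
        exact (hγ'c.tendsto _).comp (hW_tendsto x hx0)
    have hub : ∀ n : ℕ, W t ≤ C * ∫ s in (0:ℝ)..t, γ' (w n s) := by
      intro n
      have h1 : W t ≤ w (n + 1) t := ciInf_le (hWbdd t) (n + 1)
      have hnn : 0 ≤ C * ∫ s in (0:ℝ)..t, γ' (w n s) :=
        mul_nonneg hC.le (intervalIntegral.integral_nonneg ht.1 (fun s _ => hγ'nn _))
      rw [hwsucc] at h1
      calc W t ≤ min B (max 0 (C * ∫ s in (0:ℝ)..t, γ' (w n s))) := h1
        _ ≤ max 0 (C * ∫ s in (0:ℝ)..t, γ' (w n s)) := min_le_right _ _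
        _ = C * ∫ s in (0:ℝ)..t, γ' (w n s) := max_eq_right hnn
    exact ge_of_tendsto' (hDCT.const_mul C) hub
  -- the increment bound for Ψ
  have hinc : ∀ a b : ℝ, 0 ≤ a → a ≤ b → b ≤ T → Ψ b - Ψ a ≤ C * (b - a) * γ (Ψ b) := by
    intro a b ha hab hbT
    have hsplit : (∫ s in (0:ℝ)..a, γ' (W s)) + ∫ s in a..b, γ' (W s)
        = ∫ s in (0:ℝ)..b, γ' (W s) :=
      intervalIntegral.integral_add_adjacent_intervals (hgint 0 a) (hgint a b)
    have hdiff : Ψ b - Ψ a = C * ∫ s in a..b, γ' (W s) := by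
      simp only [hΨdef]; nlinarith
    have hptwise : ∀ s ∈ Icc a b, γ' (W s) ≤ γ' (Ψ b) := by
      intro s hs
      have hsT : s ∈ Icc (0:ℝ) T := ⟨ha.trans hs.1, hs.2.trans hbT⟩
      have h1 : W s ≤ Ψ s := hWΨ s hsT
      have h2 : Ψ s ≤ Ψ b := hΨmono s b hs.2
      exact hγ'mono (h1.trans h2)
    have hIb : (∫ s in a..b, γ' (W s)) ≤ (b - a) * γ' (Ψ b) := by
      have := intervalIntegral.integral_mono_on hab (hgint a b)
        (intervalIntegrable_const) hptwise
      rwa [intervalIntegral.integral_const, smul_eq_mul] at this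
    have hγeq : γ' (Ψ b) = γ (Ψ b) := hγ'eq _ (hΨnn b (ha.trans hab))
    calc Ψ b - Ψ a = C * ∫ s in a..b, γ' (W s) := hdiff
      _ ≤ C * ((b - a) * γ' (Ψ b)) := mul_le_mul_of_nonneg_left hIb hC.le
      _ = C * (b - a) * γ (Ψ b) := by rw [hγeq]; ring
  -- Ψ, hence W, vanishes on [0, T]
  have hΨzero : ∀ t ∈ Icc (0:ℝ) T, Ψ t ≤ 0 :=
    osgood_aux γ hγ_mono hγ_pos h_osgood C T hC hT Ψ hΨc.continuousOn hΨ0 hinc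
  have hWzero : ∀ t ∈ Icc (0:ℝ) T, W t = 0 := fun t ht =>
    le_antisymm ((hWΨ t ht).trans (hΨzero t ht)) (hW_mem t).1
  -- u p q ≤ w q on [0, T]
  have hu_le : ∀ q p : ℕ, q ≤ p → ∀ t ∈ Icc (0:ℝ) T, u p q t ≤ w q t := by
    intro q
    induction q with
    | zero => intro p hp t ht; rw [hw0]; exact (hu_mem p 0 hp t ht).2
    | succ q ih =>
      intro p hp t ht
      obtain ⟨p', rfl⟩ : ∃ p', p = p' + 1 := ⟨p - 1, by omega⟩
      have hqp' : q ≤ p' := by omega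
      have hrec := h_rec p' q hqp' t ht
      have hsub : Icc (0:ℝ) t ⊆ Icc 0 T := Icc_subset_Icc le_rfl ht.2
      -- replace γ by γ' inside the integral
      have hcongr : (∫ s in (0:ℝ)..t, γ (u p' q s)) = ∫ s in (0:ℝ)..t, γ' (u p' q s) := by
        refine intervalIntegral.integral_congr ?_
        intro s hs
        rw [uIcc_of_le ht.1] at hs
        exact (hγ'eq _ (hu_mem p' q hqp' s (hsub hs)).1).symm
      rw [hcongr] at hrec
      have huint : IntervalIntegrable (fun s => γ' (u p' q s)) volume 0 t := by
        refine IntervalIntegrable.mono_fun' (g := fun _ => γ B) intervalIntegrable_const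
          ((hγ'c.measurable.comp (hu_meas p' q hqp')).aestronglyMeasurable.restrict) ?_
        rw [uIoc_of_le ht.1]
        filter_upwards [ae_restrict_mem measurableSet_Ioc] with s hs
        rw [Real.norm_eq_abs, abs_of_nonneg (hγ'nn _)]
        exact hγ'B _ (hu_mem p' q hqp' s ⟨hs.1.le, hs.2.trans ht.2⟩).2
      have hImono : (∫ s in (0:ℝ)..t, γ' (u p' q s)) ≤ ∫ s in (0:ℝ)..t, γ' (w q s) := by
        refine intervalIntegral.integral_mono_on ht.1 huint (hwint q 0 t) ?_
        intro s hs
        exact hγ'mono (ih p' hqp' s (hsub hs))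
      rw [hwsucc]
      refine le_min (hu_mem _ _ (by omega) t ht).2 ?_
      calc u (p' + 1) (q + 1) t ≤ C * ∫ s in (0:ℝ)..t, γ' (u p' q s) := hrec
        _ ≤ C * ∫ s in (0:ℝ)..t, γ' (w q s) := mul_le_mul_of_nonneg_left hImono hC.le
        _ ≤ max 0 (C * ∫ s in (0:ℝ)..t, γ' (w q s)) := le_max_right _ _
  -- final bookkeeping
  intro t ht
  set F : ℕ → ℝ := fun N => ⨆ p : ℕ, ⨆ q : ℕ, ⨆ (_ : N ≤ q), ⨆ (_ : q ≤ p), u p q t with hF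
  have hFnn : ∀ N, 0 ≤ F N := by
    intro N
    refine Real.iSup_nonneg fun p => Real.iSup_nonneg fun q =>
      Real.iSup_nonneg fun _ => Real.iSup_nonneg fun hqp => ?_
    exact (hu_mem p q hqp t ht).1
  have hFle : ∀ N, F N ≤ w N t := by
    intro N
    have h0 : 0 ≤ w N t := (hw_mem N t).1
    refine Real.iSup_le (fun p => Real.iSup_le (fun q => Real.iSup_le (fun hNq =>
      Real.iSup_le (fun hqp => ?_) h0) h0) h0) h0
    exact (hu_le q p hqp t ht).trans (hw_anti' t ht.1 N q hNq)
  refine le_antisymm ?_ (le_ciInf hFnn)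
  have hFbdd : BddBelow (range F) := ⟨0, by rintro x ⟨N, rfl⟩; exact hFnn N⟩
  calc (⨅ N, F N) ≤ ⨅ N, w N t := ciInf_mono hFbdd hFle
    _ = 0 := hWzero t ht
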